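/- For every real number a there exists δ > 0 such that the function x ↦ ( −(1/2)·( x/r_a(x) − r_a(x)/x )·(1+x)·e^{x} − (r_a(x)/2)·e^{3x} + x log x ) / x is bounded on (0,δ). (In the paper's notation: the transformed conformal-geodesic initial datum satisfies f_τ|_{scri⁻} = −r̃ log r̃ + O(r̃) as r̃ → 0⁺.) -/

import Mathlib

open Real Filter

noncomputable section

/-- `Eineg x = Ei(−x) = −∫_x^∞ e^{−t}/t dt`, the exponential integral. -/
def Eineg (x : ℝ) : ℝ := -∫ t in Set.Ioi x, Real.exp (-t) / t

/-- `u_a(x) = e^{−x}/x + a + Ei(−x)` for `x > 0`. -/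
def u (a x : ℝ) : ℝ := Real.exp (-x) / x + a + Eineg x

/-- `r_a(x) = 1/u_a(x)` (meaningful on intervals where `u_a > 0`). -/
def rga (a x : ℝ) : ℝ := (u a x)⁻¹

open Set MeasureTheory

lemma integrableOn_expint (x : ℝ) (hx : 0 < x) :
    IntegrableOn (fun t => rexp (-t) / t) (Ioi x) := by
  have hm : AEStronglyMeasurable (fun t => rexp (-t) / t) (volume.restrict (Ioi x)) := by
    apply ContinuousOn.aestronglyMeasurable _ measurableSet_Ioi
    exact (continuous_exp.comp continuous_neg).continuousOn.div continuousOn_id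
      (fun t ht => ne_of_gt (hx.trans ht))
  refine Integrable.mono' ((exp_neg_integrableOn_Ioi x one_pos).mul_const x⁻¹) hm ?_
  filter_upwards [ae_restrict_mem measurableSet_Ioi] with t ht
  have htx : x < t := ht
  rw [Real.norm_eq_abs, abs_div, abs_of_pos (exp_pos _), abs_of_pos (hx.trans htx),
    neg_one_mul, div_eq_mul_inv]
  gcongr

lemma Eineg_eq_log (x : ℝ) (hx : 0 < x) (hx1 : x ≤ 1) :
    Eineg x = Real.log x - (∫ t in Ioc x 1, (rexp (-t) - 1) / t)
      - (∫ t in Ioi 1, rexp (-t) / t) := by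
  have hIoc : IntegrableOn (fun t => rexp (-t) / t) (Ioc x 1) :=
    (integrableOn_expint x hx).mono_set Ioc_subset_Ioi_self
  have hIoi1 : IntegrableOn (fun t => rexp (-t) / t) (Ioi 1) :=
    (integrableOn_expint x hx).mono_set (Ioi_subset_Ioi hx1)
  have hsplit : (∫ t in Ioi x, rexp (-t) / t)
      = (∫ t in Ioc x 1, rexp (-t) / t) + ∫ t in Ioi 1, rexp (-t) / t := by
    rw [← setIntegral_union (Set.Ioc_disjoint_Ioi le_rfl) measurableSet_Ioi hIoc hIoi1,
      Set.Ioc_union_Ioi_eq_Ioi hx1]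
  have hIoc1 : IntegrableOn (fun t => 1 / t) (Ioc x 1) := by
    refine (ContinuousOn.integrableOn_Icc ?_).mono_set Ioc_subset_Icc_self
    exact continuousOn_const.div continuousOn_id
      (fun t ht => ne_of_gt (lt_of_lt_of_le hx ht.1))
  have hIocg : IntegrableOn (fun t => (rexp (-t) - 1) / t) (Ioc x 1) := by
    refine (ContinuousOn.integrableOn_Icc ?_).mono_set Ioc_subset_Icc_self
    exact (((continuous_exp.comp continuous_neg).continuousOn).sub continuousOn_const).div
      continuousOn_id (fun t ht => ne_of_gt (lt_of_lt_of_le hx ht.1))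
  have hdecomp : (∫ t in Ioc x 1, rexp (-t) / t)
      = (∫ t in Ioc x 1, 1 / t) + ∫ t in Ioc x 1, (rexp (-t) - 1) / t := by
    rw [← integral_add hIoc1 hIocg]
    refine setIntegral_congr_fun measurableSet_Ioc (fun t ht => ?_)
    have : t ≠ 0 := ne_of_gt (hx.trans ht.1)
    field_simp
    ring
  have hlog : (∫ t in Ioc x 1, 1 / t) = - Real.log x := by
    rw [← intervalIntegral.integral_of_le hx1, integral_one_div]
    · rw [one_div, Real.log_inv]
    · intro h
      rcases Set.mem_uIcc.mp h with h' | h' <;> linarith [h'.1, h'.2]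
  unfold Eineg
  rw [hsplit, hdecomp, hlog]
  ring

lemma abs_Eineg_sub_log (x : ℝ) (hx : 0 < x) (hx1 : x ≤ 1) :
    |Eineg x - Real.log x| ≤ 2 := by
  rw [Eineg_eq_log x hx hx1]
  set A := ∫ t in Ioc x 1, (rexp (-t) - 1) / t with hA
  set B := ∫ t in Ioi 1, rexp (-t) / t with hB
  have h1 : |A| ≤ 1 := by
    have hb := norm_setIntegral_le_of_norm_le_const (μ := volume) (s := Ioc x 1)
      (f := fun t => (rexp (-t) - 1) / t) (C := 1)
      (by rw [Real.volume_Ioc]; exact ENNReal.ofReal_lt_top)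
      (fun t ht => ?_)
    · rw [Real.volume_real_Ioc_of_le hx1] at hb
      calc |A| ≤ 1 * (1 - x) := hb
        _ ≤ 1 := by nlinarith
    · have ht0 : 0 < t := hx.trans ht.1
      rw [Real.norm_eq_abs, abs_div, abs_of_pos ht0, div_le_one ht0]
      have h2 := Real.add_one_le_exp (-t)
      have h3 : rexp (-t) ≤ 1 := by
        calc rexp (-t) ≤ rexp 0 := Real.exp_le_exp.mpr (by linarith)
          _ = 1 := Real.exp_zero
      rw [abs_le]; constructor <;> linarith
  have h2 : |B| ≤ 1 := by
    have h0 : 0 ≤ B := setIntegral_nonneg measurableSet_Ioi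
      (fun t ht => div_nonneg (exp_pos _).le (by linarith [Set.mem_Ioi.mp ht]))
    have hIoi1 : IntegrableOn (fun t => rexp (-t) / t) (Ioi 1) :=
      (integrableOn_expint x hx).mono_set (Ioi_subset_Ioi hx1)
    have hexp : IntegrableOn (fun t => rexp (-t)) (Ioi (1:ℝ)) := by
      simpa using exp_neg_integrableOn_Ioi (1:ℝ) one_pos
    have hle : B ≤ ∫ t in Ioi (1:ℝ), rexp (-t) := by
      refine setIntegral_mono_on hIoi1 hexp measurableSet_Ioi (fun t ht => ?_)
      exact div_le_self (exp_pos _).le (le_of_lt (Set.mem_Ioi.mp ht))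
    rw [integral_exp_neg_Ioi] at hle
    have : rexp (-1) ≤ 1 := by
      calc rexp (-1) ≤ rexp 0 := Real.exp_le_exp.mpr (by linarith)
        _ = 1 := Real.exp_zero
    rw [abs_of_nonneg h0]; linarith
  have heq : Real.log x - A - B - Real.log x = -(A + B) := by ring
  rw [heq, abs_neg]
  calc |A + B| ≤ |A| + |B| := abs_add_le _ _
    _ ≤ 2 := by linarith

set_option maxHeartbeats 2000000 in
/-- For every real `a`, the transformed conformal-geodesic initial datum satisfies
`f_τ|_{scri⁻} = −(1/2)(x/r_a − r_a/x)(1+x)e^x − (r_a/2)e^{3x} = −x log x + O(x)`. -/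
theorem stmt_10 (a : ℝ) :
    ∃ δ > (0:ℝ), ∃ C : ℝ, ∀ x ∈ Set.Ioo (0:ℝ) δ,
      |(-(1/2) * (x / rga a x - rga a x / x) * (1 + x) * Real.exp x
          - (rga a x / 2) * Real.exp (3*x) + x * Real.log x) / x| ≤ C := by
  have ha3 : (0:ℝ) < |a| + 3 := by positivity
  refine ⟨min (1/256) (1/(8*(|a|+3))), lt_min (by norm_num) (by positivity), 10*|a|+100, ?_⟩
  rintro x ⟨hx0, hxδ⟩
  have hx256 : x < 1/256 := lt_of_lt_of_le hxδ (min_le_left _ _)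
  have hxa : x * (|a|+3) ≤ 1/8 := by
    have h := lt_of_lt_of_le hxδ (min_le_right _ _)
    rw [lt_div_iff₀ (by positivity)] at h
    nlinarith
  have hx1 : x ≤ 1 := by linarith
  have hxne : x ≠ 0 := ne_of_gt hx0
  obtain ⟨L, hLdef⟩ : ∃ y, y = Real.log x := ⟨_, rfl⟩
  rw [← hLdef]
  obtain ⟨B, hBdef⟩ : ∃ y, y = Eineg x - L := ⟨_, rfl⟩
  have hB : |B| ≤ 2 := by rw [hBdef, hLdef]; exact abs_Eineg_sub_log x hx0 hx1
  have hE : Eineg x = L + B := by rw [hBdef]; ring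
  -- sqrt facts
  have hsq0 : 0 < Real.sqrt x := Real.sqrt_pos.mpr hx0
  have hsqle : Real.sqrt x ≤ 1/16 := by
    have h := Real.sqrt_le_sqrt hx256.le
    rwa [show Real.sqrt (1/256) = 1/16 by
      rw [show (1/256:ℝ) = (1/16)^2 by norm_num, Real.sqrt_sq (by norm_num)]] at h
  have hlogneg : L < 0 := by rw [hLdef]; exact Real.log_neg hx0 (by linarith)
  have habsL : |L| = -L := abs_of_neg hlogneg
  have hLb : -L ≤ 2 / Real.sqrt x := by
    have h1 : L = 2 * Real.log (Real.sqrt x) := by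
      rw [hLdef, Real.log_sqrt hx0.le]; ring
    have h2 := Real.log_le_sub_one_of_pos (show (0:ℝ) < (Real.sqrt x)⁻¹ by positivity)
    rw [Real.log_inv] at h2
    rw [h1, div_eq_mul_inv]
    linarith
  have hxL : x * |L| ≤ 1/8 := by
    rw [habsL]
    have hxs : x / Real.sqrt x = Real.sqrt x := Real.div_sqrt
    calc x * (-L) ≤ x * (2 / Real.sqrt x) := by
          exact mul_le_mul_of_nonneg_left hLb hx0.le
      _ = 2 * (x / Real.sqrt x) := by ring
      _ = 2 * Real.sqrt x := by rw [hxs]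
      _ ≤ 1/8 := by linarith
  have hL2 : x * L^2 ≤ 4 := by
    have hub : (-L)^2 ≤ (2/Real.sqrt x)^2 := by
      have h0 : 0 ≤ -L := by linarith
      nlinarith [hLb]
    have hsx : Real.sqrt x ^ 2 = x := Real.sq_sqrt hx0.le
    have h4 : x * (2/Real.sqrt x)^2 = 4 := by
      field_simp [ne_of_gt hsq0]
      nlinarith [hsx]
    calc x * L^2 = x * (-L)^2 := by ring
      _ ≤ x * (2/Real.sqrt x)^2 := mul_le_mul_of_nonneg_left hub hx0.le
      _ = 4 := h4
  -- exp facts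
  have he1 : 1 - x ≤ Real.exp (-x) := by linarith [Real.add_one_le_exp (-x)]
  have he2 : Real.exp (-x) ≤ 1 := by
    calc Real.exp (-x) ≤ Real.exp 0 := Real.exp_le_exp.mpr (by linarith)
      _ = 1 := Real.exp_zero
  have hexgen : ∀ y : ℝ, 0 ≤ y → y ≤ 1/2 → Real.exp y ≤ 1 + 2*y := by
    intro y hy0 hy2
    have h := Real.add_one_le_exp (-y)
    have hmul : Real.exp y * Real.exp (-y) = 1 := by
      rw [← Real.exp_add]; simp
    nlinarith [Real.exp_pos y, Real.exp_pos (-y)]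
  have hex : Real.exp x ≤ 1 + 2*x := hexgen x hx0.le (by linarith)
  have hexpos := Real.exp_pos x
  have he3 : Real.exp (3*x) ≤ 2 := by
    have := hexgen (3*x) (by linarith) (by linarith)
    linarith
  -- v facts
  obtain ⟨v, hvdef⟩ : ∃ y, y = x * u a x := ⟨_, rfl⟩
  have hv : v = Real.exp (-x) + x*a + x*L + x*B := by
    rw [hvdef]
    unfold u
    rw [hE]
    field_simp
    ring
  have habsE : |Real.exp (-x) - 1| ≤ x := by
    rw [abs_le]; constructor <;> linarith
  have hxA : |x*a| ≤ 1/8 := by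
    rw [abs_mul, abs_of_pos hx0]
    nlinarith [abs_nonneg a]
  have hxB : |x*B| ≤ 1/128 := by
    rw [abs_mul, abs_of_pos hx0]
    nlinarith [abs_nonneg B]
  have hxLlow : -(1/8) ≤ x*L := by
    have h := mul_le_mul_of_nonneg_left (neg_abs_le L) hx0.le
    have h2 : x * -|L| = -(x*|L|) := by ring
    linarith
  have hxLup : x*L ≤ 0 := mul_nonpos_of_nonneg_of_nonpos hx0.le hlogneg.le
  have hv_lb : 1/2 ≤ v := by
    rw [hv]
    have h1 := abs_le.mp hxA
    have h2 := abs_le.mp hxB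
    linarith [h1.1, h1.2, h2.1, h2.2]
  have hv_ub : v ≤ 2 := by
    rw [hv]
    have h1 := abs_le.mp hxA
    have h2 := abs_le.mp hxB
    linarith [h1.1, h1.2, h2.1, h2.2]
  have hvpos : 0 < v := by linarith
  have hvne : v ≠ 0 := ne_of_gt hvpos
  have hr : rga a x = x / v := by
    unfold rga
    have hu : u a x = v / x := by rw [hvdef]; field_simp
    rw [hu, inv_div]
  obtain ⟨c, hcdef⟩ : ∃ y, y = (v-1)/x - L := ⟨_, rfl⟩
  obtain ⟨d, hddef⟩ : ∃ y, y = (1+x)*Real.exp x - 1 := ⟨_, rfl⟩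
  obtain ⟨W, hWdef⟩ : ∃ y, y = (v+1)*(1+x)*Real.exp x/(2*v) := ⟨_, rfl⟩
  have hkey : (-(1/2) * (x / rga a x - rga a x / x) * (1 + x) * Real.exp x
      - (rga a x / 2) * Real.exp (3*x) + x * L) / x
      = L*(1-W) - c*W - Real.exp (3*x)/(2*v) := by
    rw [hr, hWdef, hcdef]
    field_simp
    ring
  rw [hkey]
  -- individual bounds
  have hdge : 0 ≤ d := by
    rw [hddef]
    nlinarith [Real.add_one_le_exp x]
  have hdle : d ≤ 4*x := by
    rw [hddef]
    nlinarith [hex, hx0.le]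
  have hv1 : |v - 1| ≤ x*(|a|+3) + x*|L| := by
    have heq : v - 1 = (Real.exp (-x) - 1) + x*a + x*L + x*B := by rw [hv]; ring
    rw [heq]
    have hxl' : |x*L| = x*|L| := by rw [abs_mul, abs_of_pos hx0]
    have hxa' : |x*a| = x*|a| := by rw [abs_mul, abs_of_pos hx0]
    have hxb' : |x*B| ≤ 2*x := by rw [abs_mul, abs_of_pos hx0]; nlinarith [abs_nonneg B]
    calc |(Real.exp (-x) - 1) + x*a + x*L + x*B|
        ≤ |(Real.exp (-x) - 1) + x*a + x*L| + |x*B| := abs_add_le _ _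
      _ ≤ |(Real.exp (-x) - 1) + x*a| + |x*L| + |x*B| := by linarith [abs_add_le ((Real.exp (-x) - 1) + x*a) (x*L)]
      _ ≤ |Real.exp (-x) - 1| + |x*a| + |x*L| + |x*B| := by linarith [abs_add_le (Real.exp (-x) - 1) (x*a)]
      _ ≤ x + x*|a| + x*|L| + 2*x := by rw [hxl', hxa']; linarith
      _ ≤ x*(|a|+3) + x*|L| := by nlinarith [abs_nonneg a]
  have h1W : |1 - W| ≤ |v-1| + 3*d := by
    have heq : 1 - W = ((v-1) - (v+1)*d)/(2*v) := by
      rw [hWdef, hddef]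
      field_simp
      ring
    rw [heq, abs_div, abs_of_pos (by linarith : (0:ℝ) < 2*v)]
    have hnum : |(v-1) - (v+1)*d| ≤ |v-1| + 3*d := by
      calc |(v-1) - (v+1)*d| ≤ |v-1| + |(v+1)*d| := abs_sub _ _
        _ = |v-1| + (v+1)*d := by rw [abs_of_nonneg (mul_nonneg (by linarith) hdge)]
        _ ≤ |v-1| + 3*d := by nlinarith
    calc |(v-1) - (v+1)*d| / (2*v) ≤ |(v-1) - (v+1)*d| :=
          div_le_self (abs_nonneg _) (by linarith)
      _ ≤ |v-1| + 3*d := hnum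
  have hT1 : |L*(1-W)| ≤ |a| + 6 := by
    rw [abs_mul]
    have hb : |1-W| ≤ x*(|a|+3) + x*|L| + 12*x := by
      have := h1W
      linarith [hv1, hdle]
    have hchain : |L| * |1-W| ≤ |L| * (x*(|a|+3) + x*|L| + 12*x) :=
      mul_le_mul_of_nonneg_left hb (abs_nonneg L)
    have hexp' : |L| * (x*(|a|+3) + x*|L| + 12*x)
        = (x*|L|)*(|a|+3) + x*|L|^2 + 12*(x*|L|) := by ring
    have hsq : |L|^2 = L^2 := sq_abs L
    have h1 : (x*|L|)*(|a|+3) ≤ (1/8)*(|a|+3) := mul_le_mul_of_nonneg_right hxL ha3.le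
    have h2 : x*|L|^2 ≤ 4 := by rw [hsq]; exact hL2
    have h3 : 12*(x*|L|) ≤ 12*(1/8) := by linarith
    calc |L| * |1-W| ≤ (x*|L|)*(|a|+3) + x*|L|^2 + 12*(x*|L|) := by rw [← hexp']; exact hchain
      _ ≤ (1/8)*(|a|+3) + 4 + 12*(1/8) := by linarith
      _ ≤ |a| + 6 := by linarith [abs_nonneg a]
  have hW_nonneg : 0 ≤ W := by
    rw [hWdef]
    apply div_nonneg
    · exact mul_nonneg (mul_nonneg (by linarith) (by linarith)) hexpos.le
    · linarith
  have hW_ub : W ≤ 8 := by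
    rw [hWdef, div_le_iff₀ (by linarith : (0:ℝ) < 2*v)]
    have h1 : (1:ℝ)+x ≤ 5/4 := by linarith
    have h2 : Real.exp x ≤ 5/4 := by linarith
    have h3 : (v+1)*(1+x) ≤ 3*(5/4) :=
      mul_le_mul (by linarith) h1 (by linarith) (by norm_num)
    have h4 : ((v+1)*(1+x))*Real.exp x ≤ (3*(5/4))*(5/4) :=
      mul_le_mul h3 h2 hexpos.le (by norm_num)
    have h5 : (v+1)*(1+x)*Real.exp x = ((v+1)*(1+x))*Real.exp x := by ring
    rw [h5]
    linarith
  have hc : |c| ≤ |a|+3 := by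
    have hceq : c = a + B + (Real.exp (-x) - 1)/x := by
      rw [hcdef, hv]
      field_simp
      ring
    have hlast : |(Real.exp (-x) - 1)/x| ≤ 1 := by
      rw [abs_div, abs_of_pos hx0, div_le_one hx0]
      exact habsE
    rw [hceq]
    calc |a + B + (Real.exp (-x) - 1)/x| ≤ |a + B| + |(Real.exp (-x) - 1)/x| := abs_add_le _ _
      _ ≤ |a| + |B| + |(Real.exp (-x) - 1)/x| := by linarith [abs_add_le a B]
      _ ≤ |a| + 3 := by linarith
  have hT2 : |c*W| ≤ (|a|+3)*8 := by
    rw [abs_mul, abs_of_nonneg hW_nonneg]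
    exact mul_le_mul hc hW_ub hW_nonneg (by positivity)
  have hT3 : |Real.exp (3*x)/(2*v)| ≤ 2 := by
    rw [abs_div, abs_of_pos (Real.exp_pos _), abs_of_pos (by linarith : (0:ℝ) < 2*v),
      div_le_iff₀ (by linarith)]
    nlinarith
  calc |L*(1-W) - c*W - Real.exp (3*x)/(2*v)|
      ≤ |L*(1-W) - c*W| + |Real.exp (3*x)/(2*v)| := abs_sub _ _
    _ ≤ |L*(1-W)| + |c*W| + |Real.exp (3*x)/(2*v)| := by linarith [abs_sub (L*(1-W)) (c*W)]
    _ ≤ (|a| + 6) + (|a|+3)*8 + 2 := by linarith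
    _ ≤ 10*|a|+100 := by linarith [abs_nonneg a]
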